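/- Let a, b, c be integers with a² - ab + c < 0, and suppose a² - ab + c = -k² for some positive integer k. Then the number of integral points on the graph of f(x) = (x² + bx + c)/(x + a) is exactly 4N - 2, where N is the number of positive divisors of |a² - ab + c| that do not exceed √|a² - ab + c|. -/

import Mathlib

/-- If `a^2 - a*b + c = -k^2` for a positive integer `k`, the graph of
`f(x) = (x^2 + b*x + c)/(x + a)` contains exactly `4N - 2` integral points, where `N` is the
number of positive divisors of `|a^2 - a*b + c|` not exceeding `√|a^2 - a*b + c|`. -/
theorem card_integral_points_neg_square
    (a b c : ℤ) (h : a ^ 2 - a * b + c < 0)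
    (hsq : ∃ k : ℤ, 0 < k ∧ a ^ 2 - a * b + c = -k ^ 2) :
    Set.ncard {p : ℤ × ℤ | p.1 ≠ -a ∧
        (p.2 : ℝ) = ((p.1 : ℝ) ^ 2 + (b : ℝ) * (p.1 : ℝ) + (c : ℝ)) / ((p.1 : ℝ) + (a : ℝ))}
      = 4 * Set.ncard {d : ℤ | 0 < d ∧ d ∣ |a ^ 2 - a * b + c| ∧
          (d : ℝ) ≤ Real.sqrt ((|a ^ 2 - a * b + c| : ℤ) : ℝ)} - 2 := by
  obtain ⟨k, hk, hm⟩ := hsq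
  set m : ℤ := a ^ 2 - a * b + c with hmdef
  have hk2 : (0:ℤ) < k ^ 2 := by positivity
  have habs : |m| = k ^ 2 := by
    rw [hm, abs_of_neg (by linarith : -k^2 < (0:ℤ))]; ring
  -- the divisor sets
  set A : Set ℤ := {d : ℤ | 0 < d ∧ d ∣ k ^ 2 ∧ d ≤ k} with hA
  set B : Set ℤ := {d : ℤ | 0 < d ∧ d ∣ k ^ 2 ∧ k < d} with hB
  set P : Set ℤ := {d : ℤ | 0 < d ∧ d ∣ k ^ 2} with hP
  set D : Set ℤ := {t : ℤ | t ≠ 0 ∧ t ∣ k ^ 2} with hD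
  -- rewrite the RHS set as A
  have hRHS : {d : ℤ | 0 < d ∧ d ∣ |a ^ 2 - a * b + c| ∧
      (d : ℝ) ≤ Real.sqrt ((|a ^ 2 - a * b + c| : ℤ) : ℝ)} = A := by
    have hsqrt : Real.sqrt (((k ^ 2 : ℤ)) : ℝ) = (k : ℝ) := by
      push_cast
      rw [Real.sqrt_sq (by exact_mod_cast hk.le)]
    ext d
    simp only [hA, Set.mem_setOf_eq, ← hmdef, habs, hsqrt, Int.cast_le]
  rw [hRHS]
  -- the LHS set is the image of D under g
  set g : ℤ → ℤ × ℤ := fun t => (t - a, t - 2*a + b + m / t) with hg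
  have hLHS : {p : ℤ × ℤ | p.1 ≠ -a ∧
      (p.2 : ℝ) = ((p.1 : ℝ) ^ 2 + (b : ℝ) * (p.1 : ℝ) + (c : ℝ)) / ((p.1 : ℝ) + (a : ℝ))}
      = g '' D := by
    ext ⟨x, y⟩
    simp only [Set.mem_setOf_eq, Set.mem_image]
    constructor
    · rintro ⟨hx, hy⟩
      have htne : x + a ≠ 0 := fun hc => hx (by linarith)
      have htneR : (x : ℝ) + (a : ℝ) ≠ 0 := by
        intro hc; apply htne; exact_mod_cast hc
      have key : y * (x + a) = x ^ 2 + b * x + c := by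
        have : (y : ℝ) * ((x : ℝ) + (a : ℝ)) = (x : ℝ)^2 + (b:ℝ)*(x:ℝ) + (c:ℝ) := by
          rw [hy]; field_simp
        exact_mod_cast this
      have hdvd : (x + a) ∣ m := by
        have : m = (x + a) * (y - (x + b - a)) := by
          rw [hmdef]; nlinarith [key]
        exact ⟨_, this⟩
      refine ⟨x + a, ⟨htne, ?_⟩, ?_⟩
      · rw [← dvd_abs, habs] at hdvd; exact hdvd
      · have hq : m = (x + a) * (y - (x + b - a)) := by
          rw [hmdef]; nlinarith [key]
        have hdiv : m / (x + a) = y - (x + b - a) := by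
          rw [hq, Int.mul_ediv_cancel_left _ htne]
        simp only [hg, Prod.ext_iff]
        constructor
        · ring
        · rw [hdiv]; ring
    · rintro ⟨t, ⟨ht0, htd⟩, hgt⟩
      have htm : t ∣ m := by rw [hm, dvd_neg]; exact htd
      obtain ⟨q, hq⟩ := htm
      have hdiv : m / t = q := by rw [hq, Int.mul_ediv_cancel_left _ ht0]
      simp only [hg, Prod.ext_iff] at hgt
      obtain ⟨hgx, hgy⟩ := hgt
      constructor
      · intro hc; apply ht0; omega
      · have hx : (x : ℝ) = (t : ℝ) - a := by exact_mod_cast hgx.symm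
        have hy : (y : ℝ) = (t : ℝ) - 2*a + b + (q : ℝ) := by
          rw [← hgy, hdiv]; push_cast; ring
        have hmR : (m : ℝ) = (t : ℝ) * (q : ℝ) := by exact_mod_cast hq
        have hmR2 : (a:ℝ)^2 - (a:ℝ)*(b:ℝ) + (c:ℝ) = (t:ℝ)*(q:ℝ) := by
          rw [← hmR]; rw [hmdef]; push_cast; ring
        have htR : (t : ℝ) ≠ 0 := by exact_mod_cast ht0
        rw [hx, hy, sub_add_cancel]
        field_simp
        nlinarith [hmR2]
  rw [hLHS]
  -- g is injective
  have hginj : Set.InjOn g D := by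
    intro t1 _ t2 _ he
    have : t1 - a = t2 - a := congrArg Prod.fst he
    omega
  rw [Set.ncard_image_of_injOn hginj]
  -- finiteness
  have hPfin : P.Finite := by
    apply Set.Finite.subset (Set.finite_Icc (1:ℤ) (k^2))
    rintro d ⟨hd0, hdd⟩
    exact ⟨hd0, Int.le_of_dvd hk2 hdd⟩
  have hAfin : A.Finite := hPfin.subset (fun d ⟨h1, h2, _⟩ => ⟨h1, h2⟩)
  have hBfin : B.Finite := hPfin.subset (fun d ⟨h1, h2, _⟩ => ⟨h1, h2⟩)
  -- P = A ∪ B disjointly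
  have hPsplit : P = A ∪ B := by
    ext d
    simp only [hP, hA, hB, Set.mem_setOf_eq, Set.mem_union]
    constructor
    · rintro ⟨h1, h2⟩
      rcases le_or_gt d k with hle | hlt
      · exact Or.inl ⟨h1, h2, hle⟩
      · exact Or.inr ⟨h1, h2, hlt⟩
    · rintro (⟨h1, h2, _⟩ | ⟨h1, h2, _⟩) <;> exact ⟨h1, h2⟩
  have hABdisj : Disjoint A B := by
    rw [Set.disjoint_left]
    rintro d ⟨_, _, h3⟩ ⟨_, _, h4⟩
    omega
  have hcardP : P.ncard = A.ncard + B.ncard := by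
    rw [hPsplit, Set.ncard_union_eq hABdisj hAfin hBfin]
  -- B is the image of A \ {k} under d ↦ k^2 / d
  have hBimg : B = (fun d => k ^ 2 / d) '' (A \ {k}) := by
    ext e
    simp only [hB, hA, Set.mem_setOf_eq, Set.mem_image, Set.mem_diff, Set.mem_singleton_iff]
    constructor
    · rintro ⟨he0, hed, hek⟩
      obtain ⟨q, hq⟩ := hed
      have hq0 : 0 < q := by nlinarith
      have hqk : q < k := by nlinarith
      refine ⟨q, ⟨⟨hq0, ⟨e, by rw [hq]; ring⟩, hqk.le⟩, by omega⟩, ?_⟩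
      rw [hq, mul_comm, Int.mul_ediv_cancel_left _ hq0.ne']
    · rintro ⟨d, ⟨⟨hd0, hdd, hdk⟩, hdne⟩, hde⟩
      obtain ⟨q, hq⟩ := hdd
      have hq0 : 0 < q := by nlinarith
      have heq : e = q := by rw [← hde, hq, Int.mul_ediv_cancel_left _ hd0.ne']
      have hdk' : d < k := lt_of_le_of_ne hdk hdne
      have hqk : k < q := by nlinarith
      exact ⟨by omega, ⟨d, by rw [hq, heq]; ring⟩, by omega⟩
  have hdivinj : Set.InjOn (fun d => k ^ 2 / d) (A \ {k}) := by
    rintro d1 ⟨⟨hd10, hd1d, _⟩, _⟩ d2 ⟨⟨hd20, hd2d, _⟩, _⟩ he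
    simp only at he
    have h1 : d1 * (k ^ 2 / d1) = k ^ 2 := Int.mul_ediv_cancel' hd1d
    have h2 : d2 * (k ^ 2 / d2) = k ^ 2 := Int.mul_ediv_cancel' hd2d
    have hqpos : 0 < k ^ 2 / d1 := by
      rcases lt_trichotomy (k ^ 2 / d1) 0 with hc | hc | hc
      · nlinarith
      · rw [hc, mul_zero] at h1; exact absurd h1.symm hk2.ne'
      · exact hc
    rw [← he] at h2
    exact mul_right_cancel₀ hqpos.ne' (h1.trans h2.symm)
  have hkA : k ∈ A := ⟨hk, ⟨k, (sq k)⟩, le_refl k⟩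
  have hApos : 0 < A.ncard := (Set.ncard_pos hAfin).mpr ⟨k, hkA⟩
  have hcardB : B.ncard = A.ncard - 1 := by
    rw [hBimg, Set.ncard_image_of_injOn hdivinj,
      Set.ncard_diff_singleton_of_mem hkA]
  -- D = P ∪ -P
  have hDsplit : D = P ∪ (Neg.neg '' P) := by
    ext t
    simp only [hD, hP, Set.mem_setOf_eq, Set.mem_union, Set.mem_image]
    constructor
    · rintro ⟨ht0, htd⟩
      rcases lt_trichotomy t 0 with hc | hc | hc
      · exact Or.inr ⟨-t, ⟨by omega, (neg_dvd).mpr htd⟩, by ring⟩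
      · exact absurd hc ht0
      · exact Or.inl ⟨hc, htd⟩
    · rintro (⟨h1, h2⟩ | ⟨s, ⟨hs0, hsd⟩, hst⟩)
      · exact ⟨h1.ne', h2⟩
      · exact ⟨by omega, by rw [← hst]; exact (neg_dvd).mpr hsd⟩
  have hPnegdisj : Disjoint P (Neg.neg '' P) := by
    rw [Set.disjoint_left]
    rintro t ⟨ht0, _⟩ ⟨s, ⟨hs0, _⟩, hst⟩
    omega
  have hnegfin : (Neg.neg '' P).Finite := hPfin.image _
  have hcardneg : (Neg.neg '' P).ncard = P.ncard :=
    Set.ncard_image_of_injective _ neg_injective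
  have hcardD : D.ncard = 2 * P.ncard := by
    rw [hDsplit, Set.ncard_union_eq hPnegdisj hPfin hnegfin, hcardneg]; ring
  rw [hcardD, hcardP, hcardB]
  omega
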